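/- arXiv:2509.00805 — 3 statements merged into one kernel-verified Lean document; each statement's English description precedes it below -/
import Mathlib

section
/- Suppose ψ : ℝ³ → ℝ³ → ℝ is such that for every unit vector Ω the map x ↦ ψ(x,Ω) is differentiable on ℝ³ and ψ satisfies ⟨Ω, ∇ₓψ(x,Ω)⟩ + σ_t(x) ψ(x,Ω) = S(x) for all x ∈ ℝ³ and all unit vectors Ω ∈ S². Assume moreover σ_t(x) > 0 for all x, and that for every unit vector Ω the map x ↦ σ_t(x)⁻¹⟨Ω, ∇ₓψ⁺(x,Ω)⟩ is differentiable on ℝ³. Then for all x and all unit vectors Ω: (i) the odd parity is determined by the even parity, ψ⁻(x,Ω) = −σ_t(x)⁻¹⟨Ω, ∇ₓψ⁺(x,Ω)⟩; and (ii) the even parity solves the second-order equation −⟨Ω, ∇ₓ( y ↦ σ_t(y)⁻¹⟨Ω, ∇ₓψ⁺(y,Ω)⟩ )(x)⟩ + σ_t(x) ψ⁺(x,Ω) = S(x). -/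
open RealInnerProductSpace

lemma inner_grad_eq_fderiv {E : Type*} [NormedAddCommGroup E] [InnerProductSpace ℝ E]
    [CompleteSpace E] (f : E → ℝ) (x v : E) :
    ⟪v, gradient f x⟫ = fderiv ℝ f x v := by
  rw [real_inner_comm, gradient, InnerProductSpace.toDual_symm_apply]

/-- For a solution `ψ` of the first-order transport equation with `σ_t > 0`,
the odd parity is determined by the even parity,
`ψ⁻(x,Ω) = −σ_t(x)⁻¹ ⟨Ω, ∇ₓψ⁺(x,Ω)⟩`, and the even parity solves the
second-order equation
`−⟨Ω, ∇ₓ(σ_t⁻¹ ⟨Ω, ∇ₓψ⁺⟩)(x)⟩ + σ_t(x) ψ⁺(x,Ω) = S(x)`. -/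
theorem second_order_even_parity_equation
    (ψ ψp ψm : EuclideanSpace ℝ (Fin 3) → EuclideanSpace ℝ (Fin 3) → ℝ)
    (σt S : EuclideanSpace ℝ (Fin 3) → ℝ)
    (hp : ∀ x Ω, ψp x Ω = (ψ x Ω + ψ x (-Ω)) / 2)
    (hm : ∀ x Ω, ψm x Ω = (ψ x Ω - ψ x (-Ω)) / 2)
    (hσ : ∀ x, 0 < σt x)
    (hdiff : ∀ Ω : EuclideanSpace ℝ (Fin 3), ‖Ω‖ = 1 →
      Differentiable ℝ (fun x => ψ x Ω))
    (heq : ∀ (x Ω : EuclideanSpace ℝ (Fin 3)), ‖Ω‖ = 1 →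
      ⟪Ω, gradient (fun y => ψ y Ω) x⟫ + σt x * ψ x Ω = S x)
    (hdiff2 : ∀ Ω : EuclideanSpace ℝ (Fin 3), ‖Ω‖ = 1 →
      Differentiable ℝ (fun x => (σt x)⁻¹ * ⟪Ω, gradient (fun y => ψp y Ω) x⟫)) :
    ∀ (x Ω : EuclideanSpace ℝ (Fin 3)), ‖Ω‖ = 1 →
      (ψm x Ω = -((σt x)⁻¹ * ⟪Ω, gradient (fun y => ψp y Ω) x⟫)) ∧
      (-⟪Ω, gradient (fun y => (σt y)⁻¹ * ⟪Ω, gradient (fun z => ψp z Ω) y⟫) x⟫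
          + σt x * ψp x Ω = S x) := by
  intro x Ω hΩ
  have hΩ' : ‖-Ω‖ = 1 := by rwa [norm_neg]
  -- fderiv of ψp in terms of fderivs of ψ
  have hpfun : (fun y => ψp y Ω) = fun y => (ψ y Ω + ψ y (-Ω)) / 2 :=
    funext fun y => hp y Ω
  have hmfun : (fun y => ψm y Ω) = fun y => (ψ y Ω - ψ y (-Ω)) / 2 :=
    funext fun y => hm y Ω
  have hAdd : ∀ z : EuclideanSpace ℝ (Fin 3),
      fderiv ℝ (fun y => ψp y Ω) z Ω
        = (fderiv ℝ (fun y => ψ y Ω) z Ω + fderiv ℝ (fun y => ψ y (-Ω)) z Ω) / 2 := by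
    intro z
    rw [hpfun]
    simp only [div_eq_inv_mul]
    rw [fderiv_const_mul (a := fun y => ψ y Ω + ψ y (-Ω)) ((hdiff Ω hΩ z).add (hdiff (-Ω) hΩ' z)),
      fderiv_fun_add (hdiff Ω hΩ z) (hdiff (-Ω) hΩ' z)]
    simp
    ring
  have hSub : fderiv ℝ (fun y => ψm y Ω) x Ω
      = (fderiv ℝ (fun y => ψ y Ω) x Ω - fderiv ℝ (fun y => ψ y (-Ω)) x Ω) / 2 := by
    rw [hmfun]
    simp only [div_eq_inv_mul]
    rw [fderiv_const_mul (a := fun y => ψ y Ω - ψ y (-Ω)) ((hdiff Ω hΩ x).sub (hdiff (-Ω) hΩ' x)),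
      fderiv_fun_sub (hdiff Ω hΩ x) (hdiff (-Ω) hΩ' x)]
    simp
  -- the two transport equations
  have h1 : ∀ z, fderiv ℝ (fun y => ψ y Ω) z Ω + σt z * ψ z Ω = S z := by
    intro z
    have := heq z Ω hΩ
    rwa [inner_grad_eq_fderiv] at this
  have h2 : ∀ z, -(fderiv ℝ (fun y => ψ y (-Ω)) z Ω) + σt z * ψ z (-Ω) = S z := by
    intro z
    have := heq z (-Ω) hΩ'
    rw [inner_grad_eq_fderiv] at this
    rwa [map_neg] at this
  -- part (i), for all points
  have key : ∀ z, ψm z Ω = -((σt z)⁻¹ * ⟪Ω, gradient (fun y => ψp y Ω) z⟫) := by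
    intro z
    rw [inner_grad_eq_fderiv, hAdd z, hm]
    have e1 := h1 z
    have e2 := h2 z
    have hσz := (hσ z).ne'
    field_simp
    ring_nf
    nlinarith [e1, e2]
  refine ⟨key x, ?_⟩
  -- part (ii)
  have keyfun : (fun y => ψm y Ω)
      = fun y => -((σt y)⁻¹ * ⟪Ω, gradient (fun z => ψp z Ω) y⟫) :=
    funext key
  have hG : fderiv ℝ (fun y => (σt y)⁻¹ * ⟪Ω, gradient (fun z => ψp z Ω) y⟫) x Ω
      = -(fderiv ℝ (fun y => ψm y Ω) x Ω) := by
    rw [keyfun, fderiv_fun_neg]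
    simp
  rw [inner_grad_eq_fderiv, hG, hSub, hp]
  have e1 := h1 x
  have e2 := h2 x
  linarith
end

section
/- Conversely, let σ_t, S : ℝ³ → ℝ with σ_t(x) > 0 for all x, let Ω ∈ ℝ³ be a unit vector, and let u : ℝ³ → ℝ be differentiable such that the map x ↦ σ_t(x)⁻¹⟨Ω, ∇u(x)⟩ is differentiable and u solves the second-order even-parity equation −⟨Ω, ∇( y ↦ σ_t(y)⁻¹⟨Ω, ∇u(y)⟩ )(x)⟩ + σ_t(x) u(x) = S(x) for all x ∈ ℝ³. Then the function ψ(x) := u(x) − σ_t(x)⁻¹⟨Ω, ∇u(x)⟩ solves the first-order transport equation ⟨Ω, ∇ψ(x)⟩ + σ_t(x) ψ(x) = S(x) for all x ∈ ℝ³. -/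
open RealInnerProductSpace

lemma inner_gradient_eq_fderiv {F : Type*} [NormedAddCommGroup F] [InnerProductSpace ℝ F] [CompleteSpace F]
    (f : F → ℝ) (x Ω : F) : ⟪Ω, gradient f x⟫ = fderiv ℝ f x Ω := by
  rw [real_inner_comm, gradient, ← InnerProductSpace.toDual_apply_apply,
    LinearIsometryEquiv.apply_symm_apply]

/-- Conversely, if `u` solves the second-order even-parity equation
`−⟨Ω, ∇(σ_t⁻¹ ⟨Ω, ∇u⟩)(x)⟩ + σ_t(x) u(x) = S(x)` with `σ_t > 0`, then
`ψ(x) = u(x) − σ_t(x)⁻¹ ⟨Ω, ∇u(x)⟩` solves the first-order transport equation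
`⟨Ω, ∇ψ(x)⟩ + σ_t(x) ψ(x) = S(x)`. -/
theorem second_order_to_first_order
    (σt S : EuclideanSpace ℝ (Fin 3) → ℝ)
    (hσ : ∀ x, 0 < σt x)
    (Ω : EuclideanSpace ℝ (Fin 3)) (hΩ : ‖Ω‖ = 1)
    (u : EuclideanSpace ℝ (Fin 3) → ℝ)
    (hu : Differentiable ℝ u)
    (hg : Differentiable ℝ (fun x => (σt x)⁻¹ * ⟪Ω, gradient u x⟫))
    (heq : ∀ x, -⟪Ω, gradient (fun y => (σt y)⁻¹ * ⟪Ω, gradient u y⟫) x⟫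
        + σt x * u x = S x) :
    ∀ x, ⟪Ω, gradient (fun y => u y - (σt y)⁻¹ * ⟪Ω, gradient u y⟫) x⟫
        + σt x * (u x - (σt x)⁻¹ * ⟪Ω, gradient u x⟫) = S x := by
  intro x
  have hsub : ⟪Ω, gradient (fun y => u y - (σt y)⁻¹ * ⟪Ω, gradient u y⟫) x⟫
      = ⟪Ω, gradient u x⟫
        - ⟪Ω, gradient (fun y => (σt y)⁻¹ * ⟪Ω, gradient u y⟫) x⟫ := by
    rw [inner_gradient_eq_fderiv, inner_gradient_eq_fderiv, inner_gradient_eq_fderiv,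
      fderiv_fun_sub (hu x) (hg x)]
    simp
  have hne : σt x ≠ 0 := (hσ x).ne'
  rw [hsub]
  have h2 : σt x * (u x - (σt x)⁻¹ * ⟪Ω, gradient u x⟫)
      = σt x * u x - ⟪Ω, gradient u x⟫ := by
    field_simp
  rw [h2, ← heq x]
  ring
end

section
/- Let N ≥ 1, let P ∈ ℝ[X] be a polynomial of degree N of the form P = c·∏_{i=1}^{N}(X − xᵢ) with c ≠ 0 and real nodes x₁,…,x_N, and suppose P is orthogonal on [−1,1] to all lower-degree polynomials: ∫_{−1}^{1} P(t)·q(t) dt = 0 for every polynomial q of degree ≤ N − 1. Let w₁,…,w_N ∈ ℝ be weights such that Σ_{i=1}^{N} wᵢ q(xᵢ) = ∫_{−1}^{1} q(t) dt for every polynomial q of degree ≤ N − 1. Then the quadrature rule is exact on all polynomials of degree ≤ 2N − 1: Σ_{i=1}^{N} wᵢ q(xᵢ) = ∫_{−1}^{1} q(t) dt for every polynomial q with deg q ≤ 2N − 1. -/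
/-- Gauss quadrature exactness: if the node polynomial
`P = c·∏ᵢ (X − xᵢ)` (with `c ≠ 0`) of degree `N` is orthogonal on `[−1,1]` to
all polynomials of degree `≤ N − 1`, and the weights `wᵢ` reproduce the
integral of every polynomial of degree `≤ N − 1`, then the quadrature is exact
for every polynomial of degree `≤ 2N − 1`. -/
theorem gauss_quadrature_exactness (N : ℕ) (hN : 1 ≤ N)
    (c : ℝ) (hc : c ≠ 0) (x : Fin N → ℝ)
    (P : Polynomial ℝ)
    (hP : P = Polynomial.C c * ∏ i : Fin N, (Polynomial.X - Polynomial.C (x i)))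
    (horth : ∀ q : Polynomial ℝ, q.degree ≤ (N - 1 : ℕ) →
      ∫ t in (-1 : ℝ)..1, P.eval t * q.eval t = 0)
    (w : Fin N → ℝ)
    (hw : ∀ q : Polynomial ℝ, q.degree ≤ (N - 1 : ℕ) →
      ∑ i : Fin N, w i * q.eval (x i) = ∫ t in (-1 : ℝ)..1, q.eval t) :
    ∀ q : Polynomial ℝ, q.degree ≤ (2 * N - 1 : ℕ) →
      ∑ i : Fin N, w i * q.eval (x i) = ∫ t in (-1 : ℝ)..1, q.eval t := by
  intro q hq
  set M : Polynomial ℝ := ∏ i : Fin N, (Polynomial.X - Polynomial.C (x i)) with hM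
  have hMmonic : M.Monic := Polynomial.monic_prod_of_monic _ _ fun i _ =>
    Polynomial.monic_X_sub_C (x i)
  have hMdeg : M.natDegree = N := by
    rw [hM, Polynomial.natDegree_prod _ _ (fun i _ => Polynomial.X_sub_C_ne_zero (x i))]
    simp [Polynomial.natDegree_X_sub_C]
  set s : Polynomial ℝ := q /ₘ M with hs
  set r : Polynomial ℝ := q %ₘ M with hr
  have hqsplit : q = M * s + r := (Polynomial.modByMonic_add_div q M).symm ▸ by ring
  -- degree bounds
  have hqnat : q.natDegree ≤ 2 * N - 1 := Polynomial.natDegree_le_of_degree_le hq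
  have hsdeg : s.degree ≤ ((N - 1 : ℕ) : WithBot ℕ) := by
    refine Polynomial.degree_le_of_natDegree_le ?_
    rw [hs, Polynomial.natDegree_divByMonic q hMmonic, hMdeg]
    omega
  have hrdeg : r.degree ≤ ((N - 1 : ℕ) : WithBot ℕ) := by
    have h1 : r.degree < M.degree := Polynomial.degree_modByMonic_lt q hMmonic
    have h2 : M.degree = (N : WithBot ℕ) := by
      rw [Polynomial.degree_eq_natDegree hMmonic.ne_zero, hMdeg]
    rw [h2] at h1
    rcases eq_or_ne r 0 with h0 | h0
    · simp [h0]
    · rw [Polynomial.degree_eq_natDegree h0] at h1 ⊢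
      exact_mod_cast Nat.le_pred_of_lt (by exact_mod_cast h1)
  -- evals at nodes
  have hMeval : ∀ i : Fin N, M.eval (x i) = 0 := by
    intro i
    rw [hM, Polynomial.eval_prod]
    exact Finset.prod_eq_zero (Finset.mem_univ i) (by simp)
  have hqeval : ∀ i : Fin N, q.eval (x i) = r.eval (x i) := by
    intro i
    rw [hqsplit]
    simp [hMeval i]
  -- integral of M*s vanishes
  have hMs : (∫ t in (-1 : ℝ)..1, M.eval t * s.eval t) = 0 := by
    have h := horth s hsdeg
    have : (∫ t in (-1 : ℝ)..1, P.eval t * s.eval t)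
        = c * ∫ t in (-1 : ℝ)..1, M.eval t * s.eval t := by
      rw [← intervalIntegral.integral_const_mul]
      congr 1; ext t; rw [hP]; simp [hM]; ring
    rw [this] at h
    exact (mul_eq_zero.mp h).resolve_left hc
  -- integrability
  have hint : ∀ p : Polynomial ℝ, IntervalIntegrable (fun t => p.eval t)
      MeasureTheory.volume (-1 : ℝ) 1 := fun p =>
    (p.continuous_aeval).intervalIntegrable _ _
  have hintMs : IntervalIntegrable (fun t => M.eval t * s.eval t)
      MeasureTheory.volume (-1 : ℝ) 1 :=
    ((M.continuous_aeval).mul (s.continuous_aeval)).intervalIntegrable _ _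
  calc ∑ i : Fin N, w i * q.eval (x i)
      = ∑ i : Fin N, w i * r.eval (x i) := by simp_rw [hqeval]
    _ = ∫ t in (-1 : ℝ)..1, r.eval t := hw r hrdeg
    _ = (∫ t in (-1 : ℝ)..1, M.eval t * s.eval t) + ∫ t in (-1 : ℝ)..1, r.eval t := by
        rw [hMs, zero_add]
    _ = ∫ t in (-1 : ℝ)..1, (M.eval t * s.eval t + r.eval t) :=
        (intervalIntegral.integral_add hintMs (hint r)).symm
    _ = ∫ t in (-1 : ℝ)..1, q.eval t := by
        congr 1; ext t; rw [hqsplit]; simp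
end
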